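/- Let M₀, M₁, M₂ be symmetric positive-definite real n×n matrices with decompositions Mᵢ = CᵢᵀCᵢ (Cᵢ invertible, i = 0,1,2). Let f, g : ℝⁿ → ℝⁿ be continuously differentiable maps, x₀ ∈ ℝⁿ, δ₀ > 0. Suppose Λ₁ > 0 satisfies Λ₁ ≥ sqrt(λ_max((C₀ᵀ)⁻¹·Df(ξ)ᵀ·M₁·Df(ξ)·C₀⁻¹)) for all ξ ∈ B_{M₀}(x₀, δ₀), and Λ₂ > 0 satisfies Λ₂ ≥ sqrt(λ_max((C₁ᵀ)⁻¹·Dg(η)ᵀ·M₂·Dg(η)·C₁⁻¹)) for all η ∈ B_{M₁}(f(x₀), Λ₁·δ₀). Then for every x ∈ B_{M₀}(x₀, δ₀), g(f(x)) ∈ B_{M₂}(g(f(x₀)), Λ₂·Λ₁·δ₀). (This is the step-composition property underlying the construction of a reachtube by iterating the stretching-factor bound over consecutive time intervals.) -/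

import Mathlib

open Matrix

/-- Largest eigenvalue of a real matrix, as the supremum of its real spectrum. -/
noncomputable def lambdaMax {n : ℕ} (S : Matrix (Fin n) (Fin n) ℝ) : ℝ :=
  sSup (spectrum ℝ S)

/-- Weighted `M`-norm of a vector: `‖y‖_M = sqrt (yᵀ M y)`. -/
noncomputable def Mnorm {n : ℕ} (M : Matrix (Fin n) (Fin n) ℝ) (y : Fin n → ℝ) : ℝ :=
  Real.sqrt (y ⬝ᵥ (M *ᵥ y))

/-- Closed ball of radius `δ` about `x` in the `M`-norm. -/
def Mball {n : ℕ} (M : Matrix (Fin n) (Fin n) ℝ) (x : Fin n → ℝ) (δ : ℝ) :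
    Set (Fin n → ℝ) :=
  {y | Mnorm M (y - x) ≤ δ}

/-- Jacobian matrix of `f : ℝⁿ → ℝⁿ` at `x`. -/
noncomputable def jacobian {n : ℕ} (f : (Fin n → ℝ) → (Fin n → ℝ)) (x : Fin n → ℝ) :
    Matrix (Fin n) (Fin n) ℝ :=
  LinearMap.toMatrix' (fderiv ℝ f x).toLinearMap

/-- Rayleigh: quadratic form of a Hermitian real matrix is bounded by `sSup` of its spectrum. -/
lemma rayleigh_le {n : ℕ} {A : Matrix (Fin n) (Fin n) ℝ} (hA : A.IsHermitian) (v : Fin n → ℝ) :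
    v ⬝ᵥ (A *ᵥ v) ≤ sSup (spectrum ℝ A) * (v ⬝ᵥ v) := by
  set U : Matrix (Fin n) (Fin n) ℝ := (hA.eigenvectorUnitary : Matrix (Fin n) (Fin n) ℝ) with hU
  set w : Fin n → ℝ := star U *ᵥ v with hw
  have hvU : v ᵥ* U = w := by
    rw [hw, Matrix.star_eq_conjTranspose, conjTranspose_eq_transpose_of_trivial,
      ← vecMul_transpose, transpose_transpose]
  have h1 : v ⬝ᵥ (A *ᵥ v) = ∑ i, hA.eigenvalues i * (w i * w i) := by
    conv_lhs => rw [hA.spectral_theorem, Unitary.conjStarAlgAut_apply]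
    rw [← mulVec_mulVec, ← mulVec_mulVec, dotProduct_mulVec, hvU, dotProduct]
    congr 1; ext i
    rw [mulVec_diagonal]
    simp [Function.comp]; ring
  have h2 : v ⬝ᵥ v = ∑ i, w i * w i := by
    have : w ⬝ᵥ w = v ⬝ᵥ v := by
      rw [hw, dotProduct_mulVec, ← hw, ← hvU, vecMul_vecMul]
      have hUU : U * star U = 1 := Matrix.mem_unitaryGroup_iff.mp hA.eigenvectorUnitary.2
      rw [hUU, vecMul_one]
    rw [← this]; rfl
  rw [h1, h2, Finset.mul_sum]
  apply Finset.sum_le_sum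
  intro i _
  exact mul_le_mul_of_nonneg_right
    (le_csSup (Matrix.finite_real_spectrum.bddAbove) (hA.eigenvalues_mem_spectrum_real i))
    (mul_self_nonneg _)

/-- The Euclidean norm of a plain vector equals `sqrt (u ⬝ᵥ u)`. -/
lemma norm_equiv_symm {n : ℕ} (u : Fin n → ℝ) :
    ‖(EuclideanSpace.equiv (Fin n) ℝ).symm u‖ = Real.sqrt (u ⬝ᵥ u) := by
  rw [EuclideanSpace.norm_eq]
  congr 1
  simp [dotProduct, Real.norm_eq_abs, sq_abs, pow_two]

/-- The `M`-norm via a Cholesky-type factor. -/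
lemma mnorm_eq_norm {n : ℕ} {M C : Matrix (Fin n) (Fin n) ℝ} (hCM : Cᵀ * C = M)
    (v : Fin n → ℝ) :
    Mnorm M v = ‖(EuclideanSpace.equiv (Fin n) ℝ).symm (C *ᵥ v)‖ := by
  rw [norm_equiv_symm, Mnorm, ← hCM, ← mulVec_mulVec, dotProduct_mulVec, vecMul_transpose]

/-- The Jacobian matrix acts like the derivative. -/
lemma jacobian_mulVec {n : ℕ} (f : (Fin n → ℝ) → (Fin n → ℝ)) (x u : Fin n → ℝ) :
    jacobian f x *ᵥ u = fderiv ℝ f x u := by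
  rw [jacobian, ← Matrix.toLin'_apply, Matrix.toLin'_toMatrix']
  rfl

/-- `(Bw)⬝(Bw) = w ⬝ (BᵀB w)`. -/
lemma dot_self_mulVec {n : ℕ} (B : Matrix (Fin n) (Fin n) ℝ) (w : Fin n → ℝ) :
    (B *ᵥ w) ⬝ᵥ (B *ᵥ w) = w ⬝ᵥ ((Bᵀ * B) *ᵥ w) := by
  rw [← mulVec_mulVec, dotProduct_mulVec w, vecMul_transpose]

/-- One-step ball propagation. -/
lemma ball_propagation_step {n : ℕ}
    (M₀ M₁ C₀ C₁ : Matrix (Fin n) (Fin n) ℝ)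
    (hC₀ : IsUnit C₀.det)
    (hCM₀ : C₀ᵀ * C₀ = M₀) (hCM₁ : C₁ᵀ * C₁ = M₁)
    (f : (Fin n → ℝ) → (Fin n → ℝ)) (hf : ContDiff ℝ 1 f)
    (x₀ : Fin n → ℝ) (δ : ℝ) (hδ : 0 ≤ δ)
    (Λ : ℝ) (hΛ0 : 0 ≤ Λ)
    (hΛ : ∀ ξ ∈ Mball M₀ x₀ δ,
      Real.sqrt (lambdaMax
        ((C₀ᵀ)⁻¹ * (jacobian f ξ)ᵀ * M₁ * jacobian f ξ * C₀⁻¹)) ≤ Λ) :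
    ∀ x ∈ Mball M₀ x₀ δ, f x ∈ Mball M₁ (f x₀) (Λ * δ) := by
  intro x hx
  set e := EuclideanSpace.equiv (Fin n) ℝ with he
  set E := EuclideanSpace ℝ (Fin n)
  -- continuous linear maps given by matrices
  let mT : Matrix (Fin n) (Fin n) ℝ → (Fin n → ℝ) →L[ℝ] (Fin n → ℝ) :=
    fun A => LinearMap.toContinuousLinearMap A.mulVecLin
  have mT_apply : ∀ A u, mT A u = A *ᵥ u := fun A u => rfl
  -- the transported map
  set F : E → E := fun y => e.symm (C₁ *ᵥ f (C₀⁻¹ *ᵥ (e y))) with hF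
  set ξof : E → (Fin n → ℝ) := fun y => C₀⁻¹ *ᵥ (e y) with hξ
  set K : E → (E →L[ℝ] E) := fun y =>
    ((e.symm : (Fin n → ℝ) →L[ℝ] E).comp ((mT C₁).comp ((fderiv ℝ f (ξof y)).comp
      ((mT C₀⁻¹).comp (e : E →L[ℝ] (Fin n → ℝ)))))) with hK
  have hFD : ∀ y : E, HasFDerivAt F (K y) y := by
    intro y
    have h1 : HasFDerivAt (fun y : E => C₀⁻¹ *ᵥ (e y))
        ((mT C₀⁻¹).comp (e : E →L[ℝ] (Fin n → ℝ))) y :=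
      ((mT C₀⁻¹).hasFDerivAt).comp y (e.hasFDerivAt)
    have h2 : HasFDerivAt (fun y : E => f (C₀⁻¹ *ᵥ (e y)))
        ((fderiv ℝ f (ξof y)).comp ((mT C₀⁻¹).comp (e : E →L[ℝ] (Fin n → ℝ)))) y :=
      ((hf.differentiable one_ne_zero (ξof y)).hasFDerivAt).comp y h1
    have h3 : HasFDerivAt (fun y : E => C₁ *ᵥ f (C₀⁻¹ *ᵥ (e y)))
        ((mT C₁).comp ((fderiv ℝ f (ξof y)).comp
          ((mT C₀⁻¹).comp (e : E →L[ℝ] (Fin n → ℝ))))) y :=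
      ((mT C₁).hasFDerivAt).comp y h2
    exact (e.symm.hasFDerivAt).comp y h3
  -- relating norms
  have normball : ∀ v : Fin n → ℝ, Mnorm M₀ v = ‖e.symm (C₀ *ᵥ v)‖ := fun v =>
    mnorm_eq_norm hCM₀ v
  -- key operator norm bound
  have hKnorm : ∀ y : E, ξof y ∈ Mball M₀ x₀ δ → ‖K y‖ ≤ Λ := by
    intro y hy
    apply ContinuousLinearMap.opNorm_le_bound _ hΛ0
    intro v
    set ξ := ξof y
    set J := jacobian f ξ with hJ
    set B : Matrix (Fin n) (Fin n) ℝ := C₁ * J * C₀⁻¹ with hB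
    set w : Fin n → ℝ := e v with hwv
    have hKv : K y v = e.symm (B *ᵥ w) := by
      simp only [hK, ContinuousLinearMap.comp_apply, ContinuousLinearEquiv.coe_coe, mT_apply]
      rw [← jacobian_mulVec f ξ, hB, ← mulVec_mulVec, ← mulVec_mulVec]
    have hBtB : Bᵀ * B = (C₀ᵀ)⁻¹ * Jᵀ * M₁ * J * C₀⁻¹ := by
      rw [hB, transpose_mul, transpose_mul, Matrix.transpose_nonsing_inv, ← hCM₁]
      noncomm_ring
    have hsym : (Bᵀ * B).IsHermitian := by
      have := Matrix.isHermitian_conjTranspose_mul_self B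
      simpa [Matrix.conjTranspose_eq_transpose_of_trivial] using this
    have hray : w ⬝ᵥ ((Bᵀ * B) *ᵥ w) ≤ lambdaMax (Bᵀ * B) * (w ⬝ᵥ w) :=
      rayleigh_le hsym w
    have hΛle : lambdaMax (Bᵀ * B) ≤ Λ ^ 2 := by
      have hs : Real.sqrt (lambdaMax (Bᵀ * B)) ≤ Λ := by
        rw [hBtB]; exact hΛ ξ hy
      rcases le_or_gt (lambdaMax (Bᵀ * B)) 0 with h | h
      · exact h.trans (sq_nonneg Λ)
      · calc lambdaMax (Bᵀ * B) = Real.sqrt (lambdaMax (Bᵀ * B)) ^ 2 :=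
              (Real.sq_sqrt h.le).symm
          _ ≤ Λ ^ 2 := pow_le_pow_left₀ (Real.sqrt_nonneg _) hs 2
    have hnormKv : ‖K y v‖ = Real.sqrt (w ⬝ᵥ ((Bᵀ * B) *ᵥ w)) := by
      rw [hKv, norm_equiv_symm, dot_self_mulVec]
    have hnormv : ‖v‖ = Real.sqrt (w ⬝ᵥ w) := by
      conv_lhs => rw [← e.symm_apply_apply v]
      exact norm_equiv_symm (e v)
    rw [hnormKv, hnormv]
    calc Real.sqrt (w ⬝ᵥ ((Bᵀ * B) *ᵥ w)) ≤ Real.sqrt (Λ ^ 2 * (w ⬝ᵥ w)) := by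
          apply Real.sqrt_le_sqrt
          calc w ⬝ᵥ ((Bᵀ * B) *ᵥ w) ≤ lambdaMax (Bᵀ * B) * (w ⬝ᵥ w) := hray
            _ ≤ Λ ^ 2 * (w ⬝ᵥ w) := by
                apply mul_le_mul_of_nonneg_right hΛle
                have : w ⬝ᵥ w = ∑ i, w i * w i := rfl
                rw [this]
                exact Finset.sum_nonneg fun i _ => mul_self_nonneg _
      _ = Λ * Real.sqrt (w ⬝ᵥ w) := by
          rw [Real.sqrt_mul (sq_nonneg Λ), Real.sqrt_sq hΛ0]
  -- the ball in E
  set y₀ : E := e.symm (C₀ *ᵥ x₀) with hy₀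
  set s : Set E := Metric.closedBall y₀ δ with hs
  have hmem : ∀ y ∈ s, ξof y ∈ Mball M₀ x₀ δ := by
    intro y hy
    have hcv : C₀ *ᵥ (ξof y - x₀) = e y - C₀ *ᵥ x₀ := by
      rw [mulVec_sub, hξ, mulVec_mulVec, Matrix.mul_nonsing_inv _ hC₀, one_mulVec]
    have : Mnorm M₀ (ξof y - x₀) = ‖y - y₀‖ := by
      rw [normball, hcv, map_sub, hy₀, e.symm_apply_apply]
    rw [Mball, Set.mem_setOf_eq, this]
    exact (dist_eq_norm y y₀).symm.le.trans (Metric.mem_closedBall.mp hy)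
  -- apply the mean value inequality
  set y : E := e.symm (C₀ *ᵥ x) with hy
  have hys : y ∈ s := by
    rw [Metric.mem_closedBall, dist_eq_norm]
    have : y - y₀ = e.symm (C₀ *ᵥ (x - x₀)) := by
      rw [mulVec_sub, map_sub]
    rw [this, ← normball]
    exact hx
  have hy₀s : y₀ ∈ s := Metric.mem_closedBall_self hδ
  have hmv : ‖F y - F y₀‖ ≤ Λ * ‖y - y₀‖ := by
    apply (convex_closedBall y₀ δ).norm_image_sub_le_of_norm_fderiv_le
      (fun z _ => (hFD z).differentiableAt)
      (fun z hz => by rw [(hFD z).fderiv]; exact hKnorm z (hmem z hz)) hy₀s hys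
  have hξy : ξof y = x := by
    show C₀⁻¹ *ᵥ e (e.symm (C₀ *ᵥ x)) = x
    rw [e.apply_symm_apply, mulVec_mulVec, Matrix.nonsing_inv_mul _ hC₀, one_mulVec]
  have hξy₀ : ξof y₀ = x₀ := by
    show C₀⁻¹ *ᵥ e (e.symm (C₀ *ᵥ x₀)) = x₀
    rw [e.apply_symm_apply, mulVec_mulVec, Matrix.nonsing_inv_mul _ hC₀, one_mulVec]
  have hFy : F y = e.symm (C₁ *ᵥ f x) := by
    rw [show F y = e.symm (C₁ *ᵥ f (ξof y)) from rfl, hξy]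
  have hFy₀ : F y₀ = e.symm (C₁ *ᵥ f x₀) := by
    rw [show F y₀ = e.symm (C₁ *ᵥ f (ξof y₀)) from rfl, hξy₀]
  have hdiff : F y - F y₀ = e.symm (C₁ *ᵥ (f x - f x₀)) := by
    rw [hFy, hFy₀, mulVec_sub, map_sub]
  rw [Mball, Set.mem_setOf_eq, mnorm_eq_norm hCM₁, ← hdiff]
  calc ‖F y - F y₀‖ ≤ Λ * ‖y - y₀‖ := hmv
    _ ≤ Λ * δ := by
        apply mul_le_mul_of_nonneg_left _ hΛ0
        have : y - y₀ = e.symm (C₀ *ᵥ (x - x₀)) := by rw [mulVec_sub, map_sub]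
        rw [this, ← normball]
        exact hx

/-- step-composition property underlying the reachtube
construction: iterating the stretching-factor bound over two consecutive
steps multiplies the radii. -/
theorem ball_propagation_compose {n : ℕ}
    (M₀ M₁ M₂ C₀ C₁ C₂ : Matrix (Fin n) (Fin n) ℝ)
    (hM₀ : M₀.PosDef) (hM₁ : M₁.PosDef) (hM₂ : M₂.PosDef)
    (hC₀ : IsUnit C₀.det) (hC₁ : IsUnit C₁.det) (hC₂ : IsUnit C₂.det)
    (hCM₀ : C₀ᵀ * C₀ = M₀) (hCM₁ : C₁ᵀ * C₁ = M₁) (hCM₂ : C₂ᵀ * C₂ = M₂)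
    (f g : (Fin n → ℝ) → (Fin n → ℝ)) (hf : ContDiff ℝ 1 f) (hg : ContDiff ℝ 1 g)
    (x₀ : Fin n → ℝ) (δ₀ : ℝ) (hδ₀ : 0 < δ₀)
    (Λ₁ Λ₂ : ℝ) (hΛ₁pos : 0 < Λ₁) (hΛ₂pos : 0 < Λ₂)
    (hΛ₁ : ∀ ξ ∈ Mball M₀ x₀ δ₀,
      Real.sqrt (lambdaMax
        ((C₀ᵀ)⁻¹ * (jacobian f ξ)ᵀ * M₁ * jacobian f ξ * C₀⁻¹)) ≤ Λ₁)
    (hΛ₂ : ∀ η ∈ Mball M₁ (f x₀) (Λ₁ * δ₀),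
      Real.sqrt (lambdaMax
        ((C₁ᵀ)⁻¹ * (jacobian g η)ᵀ * M₂ * jacobian g η * C₁⁻¹)) ≤ Λ₂) :
    ∀ x ∈ Mball M₀ x₀ δ₀, g (f x) ∈ Mball M₂ (g (f x₀)) (Λ₂ * Λ₁ * δ₀) := by
  intro x hx
  have step1 := ball_propagation_step M₀ M₁ C₀ C₁ hC₀ hCM₀ hCM₁ f hf x₀ δ₀ hδ₀.le
    Λ₁ hΛ₁pos.le hΛ₁ x hx
  have step2 := ball_propagation_step M₁ M₂ C₁ C₂ hC₁ hCM₁ hCM₂ g hg (f x₀) (Λ₁ * δ₀)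
    (by positivity) Λ₂ hΛ₂pos.le hΛ₂ (f x) step1
  rw [mul_assoc]
  exact step2
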